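/- Let M and N be commutative monoids with N conical (x ≤ 0 implies x = 0 for the algebraic preorder), and let μ : M → N be a monoid homomorphism. Then: (1) the set I = {x ∈ M : μ(x) = 0} is an o-ideal of M, i.e. it is nonempty and x + y ∈ I if and only if x ∈ I and y ∈ I; (2) the relation x ≡_I y defined by ∃ u, v ∈ I with x + u = y + v is a monoid congruence on M; (3) there is a unique monoid homomorphism μ̄ : M/≡_I → N such that μ̄([x]) = μ(x) for all x ∈ M; and (4) if μ is a V-homomorphism, then so is μ̄. -/

import Mathlib

/-- A V-homomorphism between commutative monoids. -/
def IsVHom {M N : Type*} [AddCommMonoid M] [AddCommMonoid N] (μ : M → N) : Prop :=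
  ∀ (c : M) (a' b' : N), μ c = a' + b' →
    ∃ a b : M, c = a + b ∧ μ a = a' ∧ μ b = b'

/-- The congruence `≡_I` for `I = μ⁻¹{0}`. -/
def zeroIdealCon {M N : Type*} [AddCommMonoid M] [AddCommMonoid N] (μ : M →+ N) : AddCon M where
  r x y := ∃ u, μ u = 0 ∧ ∃ v, μ v = 0 ∧ x + u = y + v
  iseqv := by
    refine ⟨fun x => ⟨0, map_zero μ, 0, map_zero μ, rfl⟩, ?_, ?_⟩
    · rintro x y ⟨u, hu, v, hv, h⟩
      exact ⟨v, hv, u, hu, h.symm⟩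
    · rintro x y z ⟨u, hu, v, hv, h⟩ ⟨u', hu', v', hv', h'⟩
      refine ⟨u + u', by rw [map_add, hu, hu', add_zero],
        v' + v, by rw [map_add, hv, hv', add_zero], ?_⟩
      rw [← add_assoc, h, add_right_comm, h', add_assoc]
  add' := by
    rintro w x y z ⟨u, hu, v, hv, h⟩ ⟨u', hu', v', hv', h'⟩
    refine ⟨u + u', by rw [map_add, hu, hu', add_zero],
      v + v', by rw [map_add, hv, hv', add_zero], ?_⟩
    rw [add_add_add_comm, h, h', add_add_add_comm]

theorem zeroIdealCon_iff {M N : Type*} [AddCommMonoid M] [AddCommMonoid N] (μ : M →+ N)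
    (x y : M) : zeroIdealCon μ x y ↔ ∃ u, μ u = 0 ∧ ∃ v, μ v = 0 ∧ x + u = y + v :=
  Iff.rfl

/-- **Lemma 1.1.** For a monoid homomorphism `μ : M → N` with `N` conical:
`I = μ⁻¹{0}` is an o-ideal, `≡_I` is a monoid congruence, `μ` factors uniquely
through the quotient, and the factor map is a V-homomorphism if `μ` is. -/
theorem vhom_factors_through_zero_ideal {M N : Type*} [AddCommMonoid M] [AddCommMonoid N]
    (hN : ∀ x y : N, x + y = 0 → x = 0) (μ : M →+ N) :
    -- (1) `I = {x : μ x = 0}` is an o-ideal of `M`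
    ({x : M | μ x = 0}.Nonempty ∧
      (∀ x y : M, (x + y) ∈ {x : M | μ x = 0} ↔ x ∈ {x : M | μ x = 0} ∧ y ∈ {x : M | μ x = 0})) ∧
    -- (2) `≡_I` is a monoid congruence on `M`
    ∃ c : AddCon M,
      (∀ x y : M, c x y ↔ ∃ u ∈ {x : M | μ x = 0}, ∃ v ∈ {x : M | μ x = 0}, x + u = y + v) ∧
      -- (3) unique factorization of `μ` through the quotient
      ∃ μbar : c.Quotient →+ N,
        (∀ x : M, μbar (c.mk' x) = μ x) ∧
        (∀ ν : c.Quotient →+ N, (∀ x : M, ν (c.mk' x) = μ x) → ν = μbar) ∧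
        -- (4) `μbar` is a V-homomorphism whenever `μ` is
        (IsVHom μ → IsVHom μbar) := by
  constructor
  · refine ⟨⟨0, by simp⟩, ?_⟩
    intro x y
    simp only [Set.mem_setOf_eq, map_add]
    constructor
    · intro h
      exact ⟨hN _ _ h, hN _ _ (by rwa [add_comm] at h)⟩
    · rintro ⟨hx, hy⟩; rw [hx, hy, add_zero]
  · set c := zeroIdealCon μ with hc
    have hcompat : ∀ x y : M, c x y → μ x = μ y := by
      intro x y hxy
      obtain ⟨u, hu, v, hv, h⟩ := (zeroIdealCon_iff μ x y).mp hxy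
      have := congrArg μ h
      rwa [map_add, map_add, hu, hv, add_zero, add_zero] at this
    refine ⟨c, ?_, c.lift μ hcompat, fun x => rfl, ?_, ?_⟩
    · intro x y
      rw [zeroIdealCon_iff]
      simp only [Set.mem_setOf_eq]
    · intro ν hν
      ext q
      exact hν q
    · intro hV q a' b' hq
      obtain ⟨x, rfl⟩ := AddCon.mk'_surjective q
      obtain ⟨a, b, hab, ha, hb⟩ := hV x a' b' hq
      refine ⟨c.mk' a, c.mk' b, ?_, ha, hb⟩
      rw [← map_add, hab]
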